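/- Let G be a class 2 graph with Δ(G) = Δ, let v₀v₁ ∈ E(G), φ a proper edge Δ-coloring of G − v₀v₁, and K = (v₀, v₀v₁, v₁, v₁v₂, v₂, v₂v₃, v₃) a Kierstead path with respect to v₀v₁ and φ. If min{deg(v₁), deg(v₂)} < Δ, then {v₀, v₁, v₂, v₃} is φ-elementary. -/

import Mathlib

open SimpleGraph

/-- A proper edge `k`-coloring of `G` with colors in `[1, k]`. -/
def IsProperEdgeColoring {V : Type*} (G : SimpleGraph V) (k : ℕ) (c : Sym2 V → ℕ) : Prop :=
  (∀ e ∈ G.edgeSet, c e ∈ Finset.Icc 1 k) ∧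
  ∀ e ∈ G.edgeSet, ∀ f ∈ G.edgeSet, e ≠ f → (∃ v : V, v ∈ e ∧ v ∈ f) → c e ≠ c f

/-- `G` has a proper edge coloring with `k` colors. -/
def EdgeColorable {V : Type*} (G : SimpleGraph V) (k : ℕ) : Prop :=
  ∃ c : Sym2 V → ℕ, IsProperEdgeColoring G k c

/-- The set of colors of `[1, k]` missing at `v`. -/
def missingColors {V : Type*} (G : SimpleGraph V) (k : ℕ) (c : Sym2 V → ℕ) (v : V) : Set ℕ :=
  {α | α ∈ Finset.Icc 1 k ∧ ¬ ∃ e ∈ G.edgeSet, v ∈ e ∧ c e = α}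

/-- The subgraph of `G` consisting of the edges colored `α` or `β`;
its components are the `(α, β)`-chains. -/
def chainGraph {V : Type*} (G : SimpleGraph V) (c : Sym2 V → ℕ) (α β : ℕ) : SimpleGraph V :=
  SimpleGraph.fromEdgeSet {e ∈ G.edgeSet | c e = α ∨ c e = β}

open scoped Classical

namespace KP

variable {V : Type*}

lemma mem_missing {G₀ : SimpleGraph V} {k : ℕ} {c : Sym2 V → ℕ} {v : V} {θ : ℕ} :
    θ ∈ missingColors G₀ k c v ↔
      θ ∈ Finset.Icc 1 k ∧ ∀ e ∈ G₀.edgeSet, v ∈ e → c e ≠ θ := by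
  unfold missingColors
  constructor
  · rintro ⟨h1, h2⟩
    exact ⟨h1, fun e he hv hce => h2 ⟨e, he, hv, hce⟩⟩
  · rintro ⟨h1, h2⟩
    exact ⟨h1, fun ⟨e, he, hv, hce⟩ => h2 e he hv hce⟩

lemma missing_ne {G₀ : SimpleGraph V} {k : ℕ} {c : Sym2 V → ℕ} {v : V} {θ : ℕ}
    (h : θ ∈ missingColors G₀ k c v) {e : Sym2 V} (he : e ∈ G₀.edgeSet) (hv : v ∈ e) :
    c e ≠ θ := (mem_missing.1 h).2 e he hv

lemma mem_del {G : SimpleGraph V} {d e : Sym2 V} :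
    e ∈ (G.deleteEdges {d}).edgeSet ↔ e ∈ G.edgeSet ∧ e ≠ d := by
  rw [edgeSet_deleteEdges]; simp

/-- Extend a proper coloring of `G - ab` by coloring `ab` with a color missing at both ends. -/
lemma extend_coloring (G : SimpleGraph V) {a b : V} (hab : G.Adj a b) {k : ℕ} {c : Sym2 V → ℕ}
    (hc : IsProperEdgeColoring (G.deleteEdges {s(a, b)}) k c) {θ : ℕ}
    (ha : θ ∈ missingColors (G.deleteEdges {s(a, b)}) k c a)
    (hb : θ ∈ missingColors (G.deleteEdges {s(a, b)}) k c b) :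
    EdgeColorable G k := by
  refine ⟨fun e => if e = s(a, b) then θ else c e, ?_, ?_⟩
  · intro e he
    by_cases h : e = s(a, b)
    · simpa [h] using (mem_missing.1 ha).1
    · simpa [h] using hc.1 e (mem_del.2 ⟨he, h⟩)
  · intro e he f hf hef ⟨v, hve, hvf⟩
    by_cases h1 : e = s(a, b) <;> by_cases h2 : f = s(a, b)
    · exact absurd (h1.trans h2.symm) hef
    · simp only [h1, if_pos rfl, if_neg h2]
      have hfdel : f ∈ (G.deleteEdges {s(a, b)}).edgeSet := mem_del.2 ⟨hf, h2⟩
      subst h1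
      rcases Sym2.mem_iff.1 hve with rfl | rfl
      · exact fun hh => missing_ne ha hfdel hvf hh.symm
      · exact fun hh => missing_ne hb hfdel hvf hh.symm
    · simp only [h2, if_pos rfl, if_neg h1]
      have hedel : e ∈ (G.deleteEdges {s(a, b)}).edgeSet := mem_del.2 ⟨he, h1⟩
      subst h2
      rcases Sym2.mem_iff.1 hvf with rfl | rfl
      · exact missing_ne ha hedel hve
      · exact missing_ne hb hedel hve
    · simp only [if_neg h1, if_neg h2]
      exact hc.2 e (mem_del.2 ⟨he, h1⟩) f (mem_del.2 ⟨hf, h2⟩) hef ⟨v, hve, hvf⟩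

/-- Recoloring one edge with a color missing at both its ends keeps the coloring proper. -/
lemma update_proper {G₀ : SimpleGraph V} {k : ℕ} {c : Sym2 V → ℕ}
    (hc : IsProperEdgeColoring G₀ k c) {u v : V} (huv : s(u, v) ∈ G₀.edgeSet) {θ : ℕ}
    (hu : θ ∈ missingColors G₀ k c u) (hv : θ ∈ missingColors G₀ k c v) :
    IsProperEdgeColoring G₀ k (fun e => if e = s(u, v) then θ else c e) := by
  constructor
  · intro e he
    by_cases h : e = s(u, v)
    · simpa [h] using (mem_missing.1 hu).1
    · simpa [h] using hc.1 e he
  · intro e he f hf hef ⟨w, hwe, hwf⟩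
    by_cases h1 : e = s(u, v) <;> by_cases h2 : f = s(u, v)
    · exact absurd (h1.trans h2.symm) hef
    · simp only [h1, if_pos rfl, if_neg h2]
      subst h1
      rcases Sym2.mem_iff.1 hwe with rfl | rfl
      · exact fun hh => missing_ne hu hf hwf hh.symm
      · exact fun hh => missing_ne hv hf hwf hh.symm
    · simp only [h2, if_pos rfl, if_neg h1]
      subst h2
      rcases Sym2.mem_iff.1 hwf with rfl | rfl
      · exact missing_ne hu he hwe
      · exact missing_ne hv he hwe
    · simp only [if_neg h1, if_neg h2]
      exact hc.2 e he f hf hef ⟨w, hwe, hwf⟩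

/-- After updating edge `uv`, a missing color elsewhere stays missing provided it isn't `θ`. -/
lemma update_miss_keep {G₀ : SimpleGraph V} {k : ℕ} {c : Sym2 V → ℕ}
    {u v w : V} {θ σ : ℕ}
    (hσ : σ ∈ missingColors G₀ k c w) (hσθ : σ ≠ θ) :
    σ ∈ missingColors G₀ k (fun e => if e = s(u, v) then θ else c e) w := by
  rw [mem_missing] at hσ ⊢
  refine ⟨hσ.1, fun e he hw => ?_⟩
  by_cases h : e = s(u, v)
  · simpa [h] using hσθ.symm
  · simpa [h] using hσ.2 e he hw

/-- After updating edge `uv` to `θ`, the old color of `uv` becomes missing at its endpoints. -/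
lemma update_miss_old {G₀ : SimpleGraph V} {k : ℕ} {c : Sym2 V → ℕ}
    (hc : IsProperEdgeColoring G₀ k c) {u v w : V} (huv : s(u, v) ∈ G₀.edgeSet)
    (hw : w ∈ s(u, v)) {θ : ℕ}
    (hold : c (s(u, v)) ≠ θ) (hIcc : c (s(u, v)) ∈ Finset.Icc 1 k) :
    c (s(u, v)) ∈
      missingColors G₀ k (fun e => if e = s(u, v) then θ else c e) w := by
  rw [mem_missing]
  refine ⟨hIcc, fun e he hwe => ?_⟩
  by_cases h : e = s(u, v)
  · simpa [h] using fun hh => hold hh.symm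
  · simp only [if_neg h]
    exact hc.2 e he _ huv h ⟨w, hwe, hw⟩

/-- Missing colors at a vertex not on the updated edge are unchanged. -/
lemma update_miss_other {G₀ : SimpleGraph V} {k : ℕ} {c : Sym2 V → ℕ}
    {u v w : V} (hw : w ∉ s(u, v)) {θ σ : ℕ} :
    σ ∈ missingColors G₀ k (fun e => if e = s(u, v) then θ else c e) w ↔
      σ ∈ missingColors G₀ k c w := by
  rw [mem_missing, mem_missing]
  constructor <;> rintro ⟨h1, h2⟩ <;> refine ⟨h1, fun e he hwe => ?_⟩
  · have h : e ≠ s(u, v) := fun hh => hw (hh ▸ hwe)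
    simpa [h] using h2 e he hwe
  · have h : e ≠ s(u, v) := fun hh => hw (hh ▸ hwe)
    simpa [h] using h2 e he hwe

section SwapMachinery

variable {V : Type*}

/-- Swap two colors. -/
def swapc (γ δ a : ℕ) : ℕ := if a = γ then δ else if a = δ then γ else a

lemma swapc_gamma {γ δ : ℕ} : swapc γ δ γ = δ := by simp [swapc]

lemma swapc_delta {γ δ : ℕ} : swapc γ δ δ = γ := by
  unfold swapc; by_cases h : δ = γ <;> simp [h]

lemma swapc_other {γ δ a : ℕ} (h1 : a ≠ γ) (h2 : a ≠ δ) : swapc γ δ a = a := by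
  simp [swapc, h1, h2]

lemma swapc_invol (γ δ a : ℕ) : swapc γ δ (swapc γ δ a) = a := by
  unfold swapc
  by_cases h1 : a = γ <;> by_cases h2 : a = δ <;> by_cases h3 : δ = γ <;> simp_all

lemma swapc_Icc {γ δ a k : ℕ} (hγ : γ ∈ Finset.Icc 1 k) (hδ : δ ∈ Finset.Icc 1 k) :
    swapc γ δ a ∈ Finset.Icc 1 k ↔ a ∈ Finset.Icc 1 k := by
  unfold swapc
  by_cases h1 : a = γ <;> by_cases h2 : a = δ <;> simp_all

/-- The `(γ,δ)`-chain subgraph. -/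
def chainG (G₀ : SimpleGraph V) (c : Sym2 V → ℕ) (γ δ : ℕ) : SimpleGraph V where
  Adj x y := G₀.Adj x y ∧ (c (s(x, y)) = γ ∨ c (s(x, y)) = δ)
  symm := by
    refine ⟨?_⟩
    intro x y ⟨h1, h2⟩
    exact ⟨h1.symm, by rwa [Sym2.eq_swap]⟩
  loopless := ⟨fun x ⟨h1, _⟩ => G₀.loopless.irrefl x h1⟩

lemma chainG_edge {G₀ : SimpleGraph V} {c : Sym2 V → ℕ} {γ δ : ℕ} {x y : V}
    (h : (chainG G₀ c γ δ).Adj x y) : s(x, y) ∈ G₀.edgeSet := h.1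

/-- An edge at `v` colored `γ` or `δ` yields a chain edge at `v`. -/
lemma chainG_adj_of_edge {G₀ : SimpleGraph V} {c : Sym2 V → ℕ} {γ δ : ℕ} {v : V} {e : Sym2 V}
    (he : e ∈ G₀.edgeSet) (hv : v ∈ e) (hcol : c e = γ ∨ c e = δ) :
    ∃ w, (chainG G₀ c γ δ).Adj v w ∧ e = s(v, w) := by
  obtain ⟨w, rfl⟩ := Sym2.mem_iff_exists.1 hv
  exact ⟨w, ⟨G₀.mem_edgeSet.1 he, hcol⟩, rfl⟩

/-- In a proper coloring, each chain vertex missing one of the two colors has at most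
one chain neighbor. -/
lemma chainG_unique_nbr {G₀ : SimpleGraph V} {k : ℕ} {c : Sym2 V → ℕ}
    (hc : IsProperEdgeColoring G₀ k c) {γ δ : ℕ} {v : V}
    (hmiss : γ ∈ missingColors G₀ k c v ∨ δ ∈ missingColors G₀ k c v) :
    ∀ a b, (chainG G₀ c γ δ).Adj v a → (chainG G₀ c γ δ).Adj v b → a = b := by
  intro a b ha hb
  by_contra hab
  have hea : s(v, a) ∈ G₀.edgeSet := ha.1
  have heb : s(v, b) ∈ G₀.edgeSet := hb.1
  have hne : s(v, a) ≠ s(v, b) := by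
    intro h
    rcases Sym2.eq_iff.1 h with ⟨_, h2⟩ | ⟨h1, h2⟩
    · exact hab h2
    · exact (chainG G₀ c γ δ).loopless.irrefl v (h2 ▸ ha)
  have hdiff := hc.2 _ hea _ heb hne ⟨v, Sym2.mem_mk_left _ _, Sym2.mem_mk_left _ _⟩
  rcases hmiss with hm | hm
  · have h1 : c (s(v, a)) ≠ γ := missing_ne hm hea (Sym2.mem_mk_left _ _)
    have h2 : c (s(v, b)) ≠ γ := missing_ne hm heb (Sym2.mem_mk_left _ _)
    rcases ha.2 with hA | hA <;> rcases hb.2 with hB | hB <;>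
      first | exact h1 hA | exact h2 hB | exact hdiff (hA.trans hB.symm)
  · have h1 : c (s(v, a)) ≠ δ := missing_ne hm hea (Sym2.mem_mk_left _ _)
    have h2 : c (s(v, b)) ≠ δ := missing_ne hm heb (Sym2.mem_mk_left _ _)
    rcases ha.2 with hA | hA <;> rcases hb.2 with hB | hB <;>
      first | exact h1 hA | exact h2 hB | exact hdiff (hA.trans hB.symm)

/-- Every vertex has at most two chain neighbors. -/
lemma chainG_three {G₀ : SimpleGraph V} {k : ℕ} {c : Sym2 V → ℕ}
    (hc : IsProperEdgeColoring G₀ k c) {γ δ : ℕ} :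
    ∀ v a b d, (chainG G₀ c γ δ).Adj v a → (chainG G₀ c γ δ).Adj v b →
      (chainG G₀ c γ δ).Adj v d → a = b ∨ a = d ∨ b = d := by
  intro v a b d ha hb hd
  by_contra hcon
  push_neg at hcon
  obtain ⟨nab, nad, nbd⟩ := hcon
  have key : ∀ x y : V, (chainG G₀ c γ δ).Adj v x → (chainG G₀ c γ δ).Adj v y → x ≠ y →
      c (s(v, x)) ≠ c (s(v, y)) := by
    intro x y hx hy hxy
    have hne : s(v, x) ≠ s(v, y) := by
      intro h
      rcases Sym2.eq_iff.1 h with ⟨_, h2⟩ | ⟨h1, h2⟩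
      · exact hxy h2
      · exact (chainG G₀ c γ δ).loopless.irrefl v (h2 ▸ hx)
    exact hc.2 _ hx.1 _ hy.1 hne ⟨v, Sym2.mem_mk_left _ _, Sym2.mem_mk_left _ _⟩
  have hab := key a b ha hb nab
  have had := key a d ha hd nad
  have hbd := key b d hb hd nbd
  rcases ha.2 with hA | hA <;> rcases hb.2 with hB | hB <;> rcases hd.2 with hD | hD <;>
    simp_all

/-- The Kempe swap of the chain component containing `u`. -/
noncomputable def kswap (G₀ : SimpleGraph V) (c : Sym2 V → ℕ) (γ δ : ℕ) (u : V) : Sym2 V → ℕ :=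
  fun e => if ∃ x ∈ e, (chainG G₀ c γ δ).Reachable x u then swapc γ δ (c e) else c e

lemma kswap_apply_reach {G₀ : SimpleGraph V} {c : Sym2 V → ℕ} {γ δ : ℕ} {u v : V} {e : Sym2 V}
    (hv : v ∈ e) (hr : (chainG G₀ c γ δ).Reachable v u) :
    kswap G₀ c γ δ u e = swapc γ δ (c e) := by
  have hcond : ∃ x ∈ e, (chainG G₀ c γ δ).Reachable x u := ⟨v, hv, hr⟩
  unfold kswap
  rw [if_pos hcond]

lemma kswap_apply_unreach {G₀ : SimpleGraph V} {c : Sym2 V → ℕ} {γ δ : ℕ} {u v : V} {e : Sym2 V}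
    (he : e ∈ G₀.edgeSet) (hv : v ∈ e) (hr : ¬ (chainG G₀ c γ δ).Reachable v u) :
    kswap G₀ c γ δ u e = c e := by
  unfold kswap
  by_cases hcond : ∃ x ∈ e, (chainG G₀ c γ δ).Reachable x u
  · obtain ⟨x, hxe, hxr⟩ := hcond
    have hxv : x ≠ v := fun h => hr (h ▸ hxr)
    obtain ⟨w, rfl⟩ := Sym2.mem_iff_exists.1 hv
    have hwx : x = w := by
      rcases Sym2.mem_iff.1 hxe with h | h
      · exact absurd h hxv
      · exact h
    subst hwx
    have hcond : ∃ y ∈ s(v, x), (chainG G₀ c γ δ).Reachable y u := ⟨x, hxe, hxr⟩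
    rw [if_pos hcond]
    by_cases hcol : c (s(v, x)) = γ ∨ c (s(v, x)) = δ
    · have hadj : (chainG G₀ c γ δ).Adj v x := ⟨G₀.mem_edgeSet.1 he, hcol⟩
      exact absurd (hadj.reachable.trans hxr) hr
    · push_neg at hcol
      exact swapc_other hcol.1 hcol.2
  · rw [if_neg hcond]

/-- If the color of `e` is neither `γ` nor `δ`, the swap does not change it. -/
lemma kswap_apply_fix {G₀ : SimpleGraph V} {c : Sym2 V → ℕ} {γ δ : ℕ} {u : V} {e : Sym2 V}
    (h1 : c e ≠ γ) (h2 : c e ≠ δ) : kswap G₀ c γ δ u e = c e := by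
  unfold kswap
  split <;> simp [swapc_other h1 h2]

lemma kswap_proper {G₀ : SimpleGraph V} {k : ℕ} {c : Sym2 V → ℕ}
    (hc : IsProperEdgeColoring G₀ k c) {γ δ : ℕ}
    (hγ : γ ∈ Finset.Icc 1 k) (hδ : δ ∈ Finset.Icc 1 k) (u : V) :
    IsProperEdgeColoring G₀ k (kswap G₀ c γ δ u) := by
  constructor
  · intro e he
    unfold kswap
    split
    · exact (swapc_Icc hγ hδ).2 (hc.1 e he)
    · exact hc.1 e he
  · intro e he f hf hef ⟨v, hve, hvf⟩
    by_cases hr : (chainG G₀ c γ δ).Reachable v u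
    · rw [kswap_apply_reach hve hr, kswap_apply_reach hvf hr]
      intro h
      exact hc.2 e he f hf hef ⟨v, hve, hvf⟩
        (by have := congrArg (swapc γ δ) h; rwa [swapc_invol, swapc_invol] at this)
    · rw [kswap_apply_unreach he hve hr, kswap_apply_unreach hf hvf hr]
      exact hc.2 e he f hf hef ⟨v, hve, hvf⟩

lemma kswap_miss_reach {G₀ : SimpleGraph V} {k : ℕ} {c : Sym2 V → ℕ} {γ δ : ℕ}
    (hγ : γ ∈ Finset.Icc 1 k) (hδ : δ ∈ Finset.Icc 1 k) {u v : V}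
    (hr : (chainG G₀ c γ δ).Reachable v u) {θ : ℕ} :
    θ ∈ missingColors G₀ k (kswap G₀ c γ δ u) v ↔
      swapc γ δ θ ∈ missingColors G₀ k c v := by
  rw [mem_missing, mem_missing]
  constructor
  · rintro ⟨h1, h2⟩
    refine ⟨(swapc_Icc hγ hδ).2 h1, fun e he hv => ?_⟩
    intro hce
    exact h2 e he hv (by rw [kswap_apply_reach hv hr, hce, swapc_invol])
  · rintro ⟨h1, h2⟩
    refine ⟨(swapc_Icc hγ hδ).1 h1, fun e he hv => ?_⟩
    rw [kswap_apply_reach hv hr]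
    intro hce
    exact h2 e he hv (by rw [← swapc_invol γ δ (c e), hce])

lemma kswap_miss_unreach {G₀ : SimpleGraph V} {k : ℕ} {c : Sym2 V → ℕ} {γ δ : ℕ}
    {u v : V} (hr : ¬ (chainG G₀ c γ δ).Reachable v u) {θ : ℕ} :
    θ ∈ missingColors G₀ k (kswap G₀ c γ δ u) v ↔ θ ∈ missingColors G₀ k c v := by
  rw [mem_missing, mem_missing]
  constructor <;> rintro ⟨h1, h2⟩ <;> refine ⟨h1, fun e he hv => ?_⟩
  · rw [← kswap_apply_unreach he hv hr]
    exact h2 e he hv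
  · rw [kswap_apply_unreach he hv hr]
    exact h2 e he hv

end SwapMachinery
section Ends

variable {V : Type*}

lemma ends_aux :
    ∀ (n : ℕ) (H : SimpleGraph V)
      (_h2 : ∀ v a b d, H.Adj v a → H.Adj v b → H.Adj v d → a = b ∨ a = d ∨ b = d)
      (x y z : V)
      (_hx : ∀ a b, H.Adj x a → H.Adj x b → a = b)
      (_hy : ∀ a b, H.Adj y a → H.Adj y b → a = b)
      (_hz : ∀ a b, H.Adj z a → H.Adj z b → a = b)
      (_nxy : x ≠ y) (_nxz : x ≠ z) (_nyz : y ≠ z)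
      (p : H.Walk x y) (_hp : p.IsPath) (_hn : p.length ≤ n)
      (q : H.Walk x z) (_hq : q.IsPath), False := by
  intro n
  induction n with
  | zero =>
    intro H h2 x y z hx hy hz nxy nxz nyz p hp hn q hq
    exact nxy (SimpleGraph.Walk.eq_of_length_eq_zero (Nat.le_zero.1 hn))
  | succ n ih =>
    intro H h2 x y z hx hy hz nxy nxz nyz p hp hn q hq
    cases p with
    | nil => exact nxy rfl
    | @cons _ w _ hxw p' =>
      cases q with
      | nil => exact nxz rfl
      | @cons _ w' _ hxw' q' =>
        have hww : w' = w := hx _ _ hxw' hxw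
        subst hww
        rw [SimpleGraph.Walk.cons_isPath_iff] at hp hq
        by_cases hwy : w' = y
        · subst hwy
          cases q' with
          | nil => exact nyz rfl
          | @cons _ u _ hyu q'' =>
            have hux : u ≠ x := by
              intro h
              subst h
              refine hq.2 ?_
              rw [SimpleGraph.Walk.support_cons]
              exact List.mem_cons_of_mem _ q''.start_mem_support
            exact hux (hy _ _ hyu hxw'.symm)
        · by_cases hwz : w' = z
          · subst hwz
            cases p' with
            | nil => exact hwy rfl
            | @cons _ u _ hzu p'' =>
              have hux : u ≠ x := by
                intro h
                subst h
                refine hp.2 ?_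
                rw [SimpleGraph.Walk.support_cons]
                exact List.mem_cons_of_mem _ p''.start_mem_support
              exact hux (hz _ _ hzu hxw.symm)
          · have hxsup_p : x ∉ p'.support := hp.2
            have hxsup_q : x ∉ q'.support := hq.2
            have hedges_p : ∀ e ∈ p'.edges, e ∉ ({s(x, w')} : Set (Sym2 V)) := by
              intro e he hmem
              rw [Set.mem_singleton_iff] at hmem
              subst hmem
              exact hxsup_p (p'.fst_mem_support_of_mem_edges he)
            have hedges_q : ∀ e ∈ q'.edges, e ∉ ({s(x, w')} : Set (Sym2 V)) := by
              intro e he hmem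
              rw [Set.mem_singleton_iff] at hmem
              subst hmem
              exact hxsup_q (q'.fst_mem_support_of_mem_edges he)
            have hadj' : ∀ {a b : V},
                (H.deleteEdges {s(x, w')}).Adj a b → H.Adj a b :=
              fun h => (SimpleGraph.deleteEdges_adj.1 h).1
            have h2' : ∀ v a b d, (H.deleteEdges {s(x, w')}).Adj v a →
                (H.deleteEdges {s(x, w')}).Adj v b →
                (H.deleteEdges {s(x, w')}).Adj v d → a = b ∨ a = d ∨ b = d :=
              fun v a b d ha hb hd => h2 v a b d (hadj' ha) (hadj' hb) (hadj' hd)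
            have hw1 : ∀ a b, (H.deleteEdges {s(x, w')}).Adj w' a →
                (H.deleteEdges {s(x, w')}).Adj w' b → a = b := by
              intro a b ha hb
              have hax : a ≠ x := by
                intro h; subst h
                exact (SimpleGraph.deleteEdges_adj.1 ha).2 (by rw [Sym2.eq_swap]; rfl)
              have hbx : b ≠ x := by
                intro h; subst h
                exact (SimpleGraph.deleteEdges_adj.1 hb).2 (by rw [Sym2.eq_swap]; rfl)
              rcases h2 w' a b x (hadj' ha) (hadj' hb) hxw.symm with h | h | h
              · exact h
              · exact absurd h hax
              · exact absurd h hbx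
            have hy' : ∀ a b, (H.deleteEdges {s(x, w')}).Adj y a →
                (H.deleteEdges {s(x, w')}).Adj y b → a = b :=
              fun a b ha hb => hy a b (hadj' ha) (hadj' hb)
            have hz' : ∀ a b, (H.deleteEdges {s(x, w')}).Adj z a →
                (H.deleteEdges {s(x, w')}).Adj z b → a = b :=
              fun a b ha hb => hz a b (hadj' ha) (hadj' hb)
            have hlen : (p'.toDeleteEdges {s(x, w')} hedges_p).length ≤ n := by
              have h1 : (p'.toDeleteEdges {s(x, w')} hedges_p).length = p'.length :=
                SimpleGraph.Walk.length_transfer _ _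
              have h2 : p'.length + 1 ≤ n + 1 := by
                simpa using hn
              omega
            exact ih (H.deleteEdges {s(x, w')}) h2' w' y z hw1 hy' hz' hwy hwz nyz
              (p'.toDeleteEdges _ hedges_p) (SimpleGraph.Walk.IsPath.toDeleteEdges H _ hp.1 hedges_p) hlen
              (q'.toDeleteEdges _ hedges_q) (SimpleGraph.Walk.IsPath.toDeleteEdges H _ hq.1 hedges_q)

/-- Three distinct vertices of degree ≤ 1 cannot be in one component of a graph of
maximum degree ≤ 2. -/
lemma three_ends {H : SimpleGraph V}
    (h2 : ∀ v a b d, H.Adj v a → H.Adj v b → H.Adj v d → a = b ∨ a = d ∨ b = d)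
    {x y z : V}
    (hx : ∀ a b, H.Adj x a → H.Adj x b → a = b)
    (hy : ∀ a b, H.Adj y a → H.Adj y b → a = b)
    (hz : ∀ a b, H.Adj z a → H.Adj z b → a = b)
    (nxy : x ≠ y) (nxz : x ≠ z) (nyz : y ≠ z)
    (rxy : H.Reachable x y) (rxz : H.Reachable x z) : False := by
  obtain ⟨p⟩ := rxy
  obtain ⟨q⟩ := rxz
  exact ends_aux p.toPath.1.length H h2 x y z hx hy hz nxy nxz nyz
    p.toPath.1 p.toPath.2 le_rfl q.toPath.1 q.toPath.2

end Ends
section Counting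

variable {V : Type*} [Fintype V]

lemma exists_missing {G₀ : SimpleGraph V} {k : ℕ} {c : Sym2 V → ℕ}
    (v : V) (s : Finset ℕ) (s' : Finset V)
    (hcov : ∀ w, G₀.Adj v w → w ∈ s') (hcard : s'.card + s.card < k) :
    ∃ t, t ∈ missingColors G₀ k c v ∧ t ∉ s := by
  classical
  set P : Finset ℕ := s'.image (fun w => c (s(v, w))) with hP
  have hPcard : P.card ≤ s'.card := Finset.card_image_le
  have hT : ((Finset.Icc 1 k) \ (P ∪ s)).Nonempty := by
    rw [← Finset.card_pos]
    have h1 : (Finset.Icc 1 k).card - (P ∪ s).card ≤ ((Finset.Icc 1 k) \ (P ∪ s)).card :=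
      Finset.le_card_sdiff _ _
    have h2 : (P ∪ s).card ≤ P.card + s.card := Finset.card_union_le _ _
    have h3 : (Finset.Icc 1 k).card = k := by
      rw [Nat.card_Icc]; omega
    omega
  obtain ⟨t, ht⟩ := hT
  rw [Finset.mem_sdiff, Finset.mem_union] at ht
  push_neg at ht
  refine ⟨t, ?_, ht.2.2⟩
  rw [mem_missing]
  refine ⟨ht.1, fun e he hv => ?_⟩
  obtain ⟨w, rfl⟩ := Sym2.mem_iff_exists.1 hv
  have hadj : G₀.Adj v w := G₀.mem_edgeSet.1 he
  intro hce
  exact ht.2.1 (Finset.mem_image.2 ⟨w, hcov w hadj, hce⟩)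

variable {G : SimpleGraph V}

/-- A color (avoiding a forbidden set `s`) is missing at an endpoint of the deleted edge. -/
lemma missing_at_endpoint {a b : V} (hab : G.Adj a b) {k : ℕ} {c : Sym2 V → ℕ}
    (s : Finset ℕ) (hcard : G.degree b + s.card < k + 1) :
    ∃ t, t ∈ missingColors (G.deleteEdges {s(a, b)}) k c b ∧ t ∉ s := by
  classical
  refine exists_missing b s ((G.neighborFinset b).erase a) ?_ ?_
  · intro w hw
    rw [SimpleGraph.deleteEdges_adj] at hw
    rw [Finset.mem_erase, SimpleGraph.mem_neighborFinset _ _]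
    refine ⟨?_, hw.1⟩
    intro hwa
    subst hwa
    apply hw.2
    rw [Set.mem_singleton_iff, Sym2.eq_swap]
  · have h1 : ((G.neighborFinset b).erase a).card = G.degree b - 1 := by
      rw [Finset.card_erase_of_mem, SimpleGraph.card_neighborFinset_eq_degree]
      rw [SimpleGraph.mem_neighborFinset _ _]
      exact hab.symm
    have h2 : 1 ≤ G.degree b := by
      rw [← SimpleGraph.card_neighborFinset_eq_degree]
      rw [Nat.succ_le_iff, Finset.card_pos]
      exact ⟨a, (SimpleGraph.mem_neighborFinset _ _ _).2 hab.symm⟩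
    omega

/-- A color (avoiding a forbidden set `s`) is missing at any vertex of small degree. -/
lemma missing_at_small {d : Sym2 V} {k : ℕ} {c : Sym2 V → ℕ}
    (v : V) (s : Finset ℕ) (hcard : G.degree v + s.card < k) :
    ∃ t, t ∈ missingColors (G.deleteEdges {d}) k c v ∧ t ∉ s := by
  classical
  refine exists_missing v s (G.neighborFinset v) ?_ ?_
  · intro w hw
    rw [SimpleGraph.deleteEdges_adj] at hw
    exact (SimpleGraph.mem_neighborFinset _ _ _).2 hw.1
  · rwa [SimpleGraph.card_neighborFinset_eq_degree]

end Counting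
section Mid

variable {V : Type*} [Fintype V] {G : SimpleGraph V}

lemma LA (hG : ¬ EdgeColorable G G.maxDegree) {a b : V} (hab : G.Adj a b)
    {c : Sym2 V → ℕ}
    (hc : IsProperEdgeColoring (G.deleteEdges {s(a, b)}) G.maxDegree c) {θ : ℕ}
    (ha : θ ∈ missingColors (G.deleteEdges {s(a, b)}) G.maxDegree c a)
    (hb : θ ∈ missingColors (G.deleteEdges {s(a, b)}) G.maxDegree c b) : False :=
  hG (extend_coloring G hab hc ha hb)

lemma edge_bd_mem {a b d : V} (hab : G.Adj a b) (hbd : G.Adj b d) (had : a ≠ d) :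
    s(b, d) ∈ (G.deleteEdges {s(a, b)}).edgeSet := by
  refine mem_del.2 ⟨G.mem_edgeSet.2 hbd, ?_⟩
  intro h
  rcases Sym2.eq_iff.1 h with ⟨h1, h2⟩ | ⟨h1, h2⟩
  · exact hab.ne (h1.symm ▸ rfl)
  · exact had h2.symm

/-- The 3-vertex Kierstead path: `miss b ∩ miss d = ∅`. -/
lemma B12 (hG : ¬ EdgeColorable G G.maxDegree) {a b d : V}
    (hab : G.Adj a b) (hbd : G.Adj b d) (had : a ≠ d) {c : Sym2 V → ℕ}
    (hc : IsProperEdgeColoring (G.deleteEdges {s(a, b)}) G.maxDegree c)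
    (hα : c (s(b, d)) ∈ missingColors (G.deleteEdges {s(a, b)}) G.maxDegree c a)
    {θ : ℕ}
    (hb : θ ∈ missingColors (G.deleteEdges {s(a, b)}) G.maxDegree c b)
    (hd : θ ∈ missingColors (G.deleteEdges {s(a, b)}) G.maxDegree c d) : False := by
  have hebd := edge_bd_mem hab hbd had
  have hold : c (s(b, d)) ≠ θ := missing_ne hd hebd (Sym2.mem_mk_right _ _)
  have hc' := update_proper hc hebd hb hd
  refine LA hG hab hc' (θ := c (s(b, d))) ?_ ?_
  · refine (update_miss_other ?_).2 hα
    rw [Sym2.mem_iff]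
    push_neg
    exact ⟨hab.ne, had⟩
  · exact update_miss_old hc hebd (Sym2.mem_mk_left _ _) hold (hc.1 _ hebd)

/-- The 3-vertex Kierstead path: `miss a ∩ miss d = ∅`. -/
lemma B02 (hG : ¬ EdgeColorable G G.maxDegree) {a b d : V}
    (hab : G.Adj a b) (hbd : G.Adj b d) (had : a ≠ d) {c : Sym2 V → ℕ}
    (hc : IsProperEdgeColoring (G.deleteEdges {s(a, b)}) G.maxDegree c)
    (hα : c (s(b, d)) ∈ missingColors (G.deleteEdges {s(a, b)}) G.maxDegree c a)
    {θ : ℕ}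
    (haθ : θ ∈ missingColors (G.deleteEdges {s(a, b)}) G.maxDegree c a)
    (hdθ : θ ∈ missingColors (G.deleteEdges {s(a, b)}) G.maxDegree c d) : False := by
  classical
  by_cases hθb : θ ∈ missingColors (G.deleteEdges {s(a, b)}) G.maxDegree c b
  · exact LA hG hab hc haθ hθb
  obtain ⟨t, htb, -⟩ := missing_at_endpoint hab (c := c) (k := G.maxDegree) ∅
    (by simpa using Nat.lt_succ_of_le (G.degree_le_maxDegree b))
  have hebd := edge_bd_mem hab hbd had
  have htθ : t ≠ θ := fun h => hθb (h ▸ htb)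
  have hαθ : c (s(b, d)) ≠ θ := missing_ne hdθ hebd (Sym2.mem_mk_right _ _)
  have hαt : c (s(b, d)) ≠ t := missing_ne htb hebd (Sym2.mem_mk_left _ _)
  have hθIcc : θ ∈ Finset.Icc 1 G.maxDegree := (mem_missing.1 haθ).1
  have htIcc : t ∈ Finset.Icc 1 G.maxDegree := (mem_missing.1 htb).1
  set G₀ := G.deleteEdges {s(a, b)} with hG₀
  set H := chainG G₀ c θ t with hH
  have huniq_a := chainG_unique_nbr hc (γ := θ) (δ := t) (v := a) (Or.inl haθ)
  have huniq_b := chainG_unique_nbr hc (γ := θ) (δ := t) (v := b) (Or.inr htb)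
  have huniq_d := chainG_unique_nbr hc (γ := θ) (δ := t) (v := d) (Or.inl hdθ)
  by_cases hr : H.Reachable a b
  · -- swap the component of d
    have hdb : ¬ H.Reachable d b := by
      intro hdb
      exact three_ends (chainG_three hc) huniq_b huniq_a huniq_d
        (Ne.symm hab.ne) hbd.ne had hr.symm hdb.symm
    have had' : ¬ H.Reachable a d := fun h => hdb (h.symm.trans hr)
    have hbd' : ¬ H.Reachable b d := fun h => hdb h.symm
    have hc' := kswap_proper hc hθIcc htIcc d
    refine B12 hG hab hbd had hc' ?_ (θ := t) ?_ ?_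
    · rw [kswap_apply_fix hαθ hαt]
      exact (kswap_miss_unreach had').2 hα
    · exact (kswap_miss_unreach hbd').2 htb
    · refine (kswap_miss_reach hθIcc htIcc (SimpleGraph.Reachable.refl d)).2 ?_
      rw [swapc_delta]
      exact hdθ
  · -- swap the component of b
    have hc' := kswap_proper hc hθIcc htIcc b
    refine LA hG hab hc' (θ := θ) ?_ ?_
    · exact (kswap_miss_unreach hr).2 haθ
    · refine (kswap_miss_reach hθIcc htIcc (SimpleGraph.Reachable.refl b)).2 ?_
      rw [swapc_gamma]
      exact htb

end Mid
section Top

/-- A color different from both swapped colors is unaffected in every missing set. -/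
lemma kswap_miss_fix {V : Type*} {G₀ : SimpleGraph V} {k : ℕ} {c : Sym2 V → ℕ} {γ δ : ℕ}
    (hγ : γ ∈ Finset.Icc 1 k) (hδ : δ ∈ Finset.Icc 1 k) {u v : V} {θ : ℕ}
    (h1 : θ ≠ γ) (h2 : θ ≠ δ) :
    θ ∈ missingColors G₀ k (kswap G₀ c γ δ u) v ↔ θ ∈ missingColors G₀ k c v := by
  by_cases hr : (chainG G₀ c γ δ).Reachable v u
  · rw [kswap_miss_reach hγ hδ hr, swapc_other h1 h2]
  · exact kswap_miss_unreach hr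

variable {V : Type*} [Fintype V] {G : SimpleGraph V} {v₀ v₁ v₂ v₃ : V}

lemma edge_23_mem (h12 : G.Adj v₁ v₂) (h23 : G.Adj v₂ v₃) (n02 : v₀ ≠ v₂) :
    s(v₂, v₃) ∈ (G.deleteEdges {s(v₀, v₁)}).edgeSet := by
  refine mem_del.2 ⟨G.mem_edgeSet.2 h23, ?_⟩
  intro h
  rcases Sym2.eq_iff.1 h with ⟨h1, h2⟩ | ⟨h1, h2⟩
  · exact n02 h1.symm
  · exact h12.ne' h1

lemma edges_12_23_ne (h12 : G.Adj v₁ v₂) (n13 : v₁ ≠ v₃) :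
    s(v₁, v₂) ≠ s(v₂, v₃) := by
  intro h
  rcases Sym2.eq_iff.1 h with ⟨h1, h2⟩ | ⟨h1, h2⟩
  · exact h12.ne h1
  · exact n13 h1


/-- Pair `(v₂, v₃)`: recolor `v₂v₃` with the common missing color. -/
lemma p23 (hG : ¬ EdgeColorable G G.maxDegree) (h01 : G.Adj v₀ v₁) (h12 : G.Adj v₁ v₂)
    (h23 : G.Adj v₂ v₃) (n02 : v₀ ≠ v₂) (n03 : v₀ ≠ v₃) (n13 : v₁ ≠ v₃)
    {c : Sym2 V → ℕ}
    (hc : IsProperEdgeColoring (G.deleteEdges {s(v₀, v₁)}) G.maxDegree c)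
    (hA : c (s(v₁, v₂)) ∈
      missingColors (G.deleteEdges {s(v₀, v₁)}) G.maxDegree c v₀)
    (hB : c (s(v₂, v₃)) ∈
      missingColors (G.deleteEdges {s(v₀, v₁)}) G.maxDegree c v₀ ∪
      missingColors (G.deleteEdges {s(v₀, v₁)}) G.maxDegree c v₁)
    (γ : ℕ)
    (h2 : γ ∈ missingColors (G.deleteEdges {s(v₀, v₁)}) G.maxDegree c v₂)
    (h3 : γ ∈ missingColors (G.deleteEdges {s(v₀, v₁)}) G.maxDegree c v₃) :
    False := by
  have he₂ := edge_bd_mem h01 h12 n02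
  have he₃ := edge_23_mem (v₀ := v₀) h12 h23 n02
  have hold : c (s(v₂, v₃)) ≠ γ := missing_ne h3 he₃ (Sym2.mem_mk_right _ _)
  have hc' := update_proper hc he₃ h2 h3
  have hβ2 := update_miss_old hc he₃ (Sym2.mem_mk_left _ _) hold (hc.1 _ he₃)
  have hv0ne : v₀ ∉ s(v₂, v₃) := by
    rw [Sym2.mem_iff]; push_neg; exact ⟨n02, n03⟩
  have hv1ne : v₁ ∉ s(v₂, v₃) := by
    rw [Sym2.mem_iff]; push_neg; exact ⟨h12.ne, n13⟩
  have hA' : (fun e => if e = s(v₂, v₃) then γ else c e) (s(v₁, v₂)) ∈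
      missingColors (G.deleteEdges {s(v₀, v₁)}) G.maxDegree
        (fun e => if e = s(v₂, v₃) then γ else c e) v₀ := by
    simp only [if_neg (edges_12_23_ne (v₃ := v₃) h12 n13)]
    exact (update_miss_other hv0ne).2 hA
  rcases hB with h | h
  · exact B02 hG h01 h12 n02 hc' hA' ((update_miss_other hv0ne).2 h) hβ2
  · exact B12 hG h01 h12 n02 hc' hA' ((update_miss_other hv1ne).2 h) hβ2

/-- Case I facts, via shifting the uncolored edge to `v₁v₂`. -/
lemma shift_facts (hG : ¬ EdgeColorable G G.maxDegree) (h01 : G.Adj v₀ v₁) (h12 : G.Adj v₁ v₂)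
    (h23 : G.Adj v₂ v₃) (n02 : v₀ ≠ v₂) (n03 : v₀ ≠ v₃) (n13 : v₁ ≠ v₃)
    {c : Sym2 V → ℕ}
    (hc : IsProperEdgeColoring (G.deleteEdges {s(v₀, v₁)}) G.maxDegree c)
    (hA : c (s(v₁, v₂)) ∈
      missingColors (G.deleteEdges {s(v₀, v₁)}) G.maxDegree c v₀)
    (hB1 : c (s(v₂, v₃)) ∈
      missingColors (G.deleteEdges {s(v₀, v₁)}) G.maxDegree c v₁)
    (γ : ℕ)
    (hγ : γ ∈ missingColors (G.deleteEdges {s(v₀, v₁)}) G.maxDegree c v₁ ∨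
      γ = c (s(v₁, v₂)))
    (h3 : γ ∈ missingColors (G.deleteEdges {s(v₀, v₁)}) G.maxDegree c v₃) :
    False := by
  have he₂ := edge_bd_mem h01 h12 n02
  have he₃ := edge_23_mem (v₀ := v₀) h12 h23 n02
  have hne₃₁ : s(v₂, v₃) ≠ s(v₀, v₁) := (mem_del.1 he₃).2
  have hG₂G₀ : ∀ f ∈ (G.deleteEdges {s(v₁, v₂)}).edgeSet, f ≠ s(v₀, v₁) →
      f ∈ (G.deleteEdges {s(v₀, v₁)}).edgeSet :=
    fun f hf hne => mem_del.2 ⟨(mem_del.1 hf).1, hne⟩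
  have hψ_prop : IsProperEdgeColoring (G.deleteEdges {s(v₁, v₂)}) G.maxDegree
      (fun e => if e = s(v₀, v₁) then c (s(v₁, v₂)) else c e) := by
    constructor
    · intro e he
      by_cases h : e = s(v₀, v₁)
      · simpa [h] using hc.1 _ he₂
      · simpa [h] using hc.1 e (hG₂G₀ e he h)
    · intro e he f hf hef ⟨x, hxe, hxf⟩
      by_cases h1 : e = s(v₀, v₁) <;> by_cases h2 : f = s(v₀, v₁)
      · exact absurd (h1.trans h2.symm) hef
      · simp only [h1, if_pos rfl, if_neg h2]
        subst h1
        have hfG₀ := hG₂G₀ f hf h2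
        rcases Sym2.mem_iff.1 hxe with rfl | rfl
        · exact fun hh => missing_ne hA hfG₀ hxf hh.symm
        · refine fun hh => hc.2 f hfG₀ _ he₂ ?_ ⟨x, hxf, Sym2.mem_mk_left _ _⟩ hh.symm
          exact (mem_del.1 hf).2
      · simp only [h2, if_pos rfl, if_neg h1]
        subst h2
        have heG₀ := hG₂G₀ e he h1
        rcases Sym2.mem_iff.1 hxf with rfl | rfl
        · exact missing_ne hA heG₀ hxe
        · refine hc.2 e heG₀ _ he₂ ?_ ⟨x, hxe, Sym2.mem_mk_left _ _⟩
          exact (mem_del.1 he).2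
      · simp only [if_neg h1, if_neg h2]
        exact hc.2 e (hG₂G₀ e he h1) f (hG₂G₀ f hf h2) hef ⟨x, hxe, hxf⟩
  have sh2 : ∀ σ, σ ∈ missingColors (G.deleteEdges {s(v₀, v₁)}) G.maxDegree c v₁ →
      σ ∈ missingColors (G.deleteEdges {s(v₁, v₂)}) G.maxDegree
        (fun e => if e = s(v₀, v₁) then c (s(v₁, v₂)) else c e) v₁ := by
    intro σ hσ
    rw [mem_missing] at hσ ⊢
    refine ⟨hσ.1, fun f hf hvf => ?_⟩
    by_cases h : f = s(v₀, v₁)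
    · simpa [h] using hσ.2 _ he₂ (Sym2.mem_mk_left _ _)
    · simpa [h] using hσ.2 f (hG₂G₀ f hf h) hvf
  have sh4 : ∀ σ, σ ∈ missingColors (G.deleteEdges {s(v₀, v₁)}) G.maxDegree c v₃ →
      σ ∈ missingColors (G.deleteEdges {s(v₁, v₂)}) G.maxDegree
        (fun e => if e = s(v₀, v₁) then c (s(v₁, v₂)) else c e) v₃ := by
    intro σ hσ
    rw [mem_missing] at hσ ⊢
    refine ⟨hσ.1, fun f hf hvf => ?_⟩
    have h : f ≠ s(v₀, v₁) := by
      intro hh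
      subst hh
      rcases Sym2.mem_iff.1 hvf with h' | h'
      · exact n03 h'.symm
      · exact n13 h'.symm
    simpa [h] using hσ.2 f (hG₂G₀ f hf h) hvf
  have sh3 : c (s(v₁, v₂)) ∈
      missingColors (G.deleteEdges {s(v₁, v₂)}) G.maxDegree
        (fun e => if e = s(v₀, v₁) then c (s(v₁, v₂)) else c e) v₂ := by
    rw [mem_missing]
    refine ⟨hc.1 _ he₂, fun f hf hvf => ?_⟩
    have h : f ≠ s(v₀, v₁) := by
      intro hh
      subst hh
      rcases Sym2.mem_iff.1 hvf with h' | h'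
      · exact n02 h'.symm
      · exact h12.ne' h'
    simp only [if_neg h]
    refine hc.2 f (hG₂G₀ f hf h) _ he₂ ?_ ⟨v₂, hvf, Sym2.mem_mk_right _ _⟩
    exact (mem_del.1 hf).2
  have hKψ : (fun e => if e = s(v₀, v₁) then c (s(v₁, v₂)) else c e)
      (s(v₂, v₃)) ∈
      missingColors (G.deleteEdges {s(v₁, v₂)}) G.maxDegree
        (fun e => if e = s(v₀, v₁) then c (s(v₁, v₂)) else c e) v₁ := by
    simp only [if_neg hne₃₁]
    exact sh2 _ hB1
  rcases hγ with h | h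
  · exact B02 hG h12 h23 n13 hψ_prop hKψ (sh2 γ h) (sh4 γ h3)
  · rw [h] at h3
    exact B12 hG h12 h23 n13 hψ_prop hKψ sh3 (sh4 _ h3)

/-- Pair `(v₀, v₃)`, Case I (`c e₃` missing at `v₁`), branch `deg v₁ < Δ`. -/
lemma p03I_d1 (hG : ¬ EdgeColorable G G.maxDegree) (h01 : G.Adj v₀ v₁) (h12 : G.Adj v₁ v₂)
    (h23 : G.Adj v₂ v₃) (n02 : v₀ ≠ v₂) (n03 : v₀ ≠ v₃) (n13 : v₁ ≠ v₃)
    {c : Sym2 V → ℕ}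
    (hc : IsProperEdgeColoring (G.deleteEdges {s(v₀, v₁)}) G.maxDegree c)
    (hA : c (s(v₁, v₂)) ∈
      missingColors (G.deleteEdges {s(v₀, v₁)}) G.maxDegree c v₀)
    (hB1 : c (s(v₂, v₃)) ∈
      missingColors (G.deleteEdges {s(v₀, v₁)}) G.maxDegree c v₁)
    (hd1 : G.degree v₁ < G.maxDegree)
    (γ : ℕ)
    (h0 : γ ∈ missingColors (G.deleteEdges {s(v₀, v₁)}) G.maxDegree c v₀)
    (h3 : γ ∈ missingColors (G.deleteEdges {s(v₀, v₁)}) G.maxDegree c v₃) :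
    False := by
  classical
  have he₂ := edge_bd_mem h01 h12 n02
  have he₃ := edge_23_mem (v₀ := v₀) h12 h23 n02
  obtain ⟨t, ht1, htβ'⟩ := missing_at_endpoint h01 (c := c) (k := G.maxDegree)
    {c (s(v₂, v₃))} (by rw [Finset.card_singleton]; omega)
  have htβ : t ≠ c (s(v₂, v₃)) := by simpa using htβ'
  -- easy shortcuts
  by_cases ht0 : t ∈ missingColors (G.deleteEdges {s(v₀, v₁)}) G.maxDegree c v₀
  · exact LA hG h01 hc ht0 ht1
  have hγt : γ ≠ t := fun h => ht0 (h ▸ h0)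
  have hγα : γ ≠ c (s(v₁, v₂)) := by
    intro h
    exact shift_facts hG h01 h12 h23 n02 n03 n13 hc hA hB1 γ (Or.inr h) h3
  have hγβ : γ ≠ c (s(v₂, v₃)) :=
    fun h => missing_ne h3 he₃ (Sym2.mem_mk_right _ _) h.symm
  have htα : t ≠ c (s(v₁, v₂)) :=
    fun h => missing_ne ht1 he₂ (Sym2.mem_mk_left _ _) h.symm
  have hγI : γ ∈ Finset.Icc 1 G.maxDegree := (mem_missing.1 h0).1
  have htI : t ∈ Finset.Icc 1 G.maxDegree := (mem_missing.1 ht1).1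
  have hu0 := chainG_unique_nbr hc (γ := γ) (δ := t) (v := v₀) (Or.inl h0)
  have hu1 := chainG_unique_nbr hc (γ := γ) (δ := t) (v := v₁) (Or.inr ht1)
  have hu3 := chainG_unique_nbr hc (γ := γ) (δ := t) (v := v₃) (Or.inl h3)
  by_cases hr : (chainG (G.deleteEdges {s(v₀, v₁)}) c γ t).Reachable v₀ v₁
  · have h31 : ¬ (chainG (G.deleteEdges {s(v₀, v₁)}) c γ t).Reachable v₃ v₁ :=
      fun h => three_ends (chainG_three hc) hu1 hu0 hu3 (Ne.symm h01.ne) n13 n03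
        hr.symm h.symm
    have h03 : ¬ (chainG (G.deleteEdges {s(v₀, v₁)}) c γ t).Reachable v₀ v₃ :=
      fun h => h31 (h.symm.trans hr)
    have h13 : ¬ (chainG (G.deleteEdges {s(v₀, v₁)}) c γ t).Reachable v₁ v₃ :=
      fun h => h31 h.symm
    have hc' := kswap_proper hc hγI htI v₃
    refine shift_facts hG h01 h12 h23 n02 n03 n13 hc' ?_ ?_ t (Or.inl ?_) ?_
    · rw [kswap_apply_fix (fun h => hγα h.symm) (fun h => htα h.symm)]
      exact (kswap_miss_unreach h03).2 hA
    · rw [kswap_apply_fix (fun h => hγβ h.symm) (fun h => htβ h.symm)]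
      exact (kswap_miss_unreach h13).2 hB1
    · exact (kswap_miss_unreach h13).2 ht1
    · refine (kswap_miss_reach hγI htI (SimpleGraph.Reachable.refl v₃)).2 ?_
      rw [swapc_delta]
      exact h3
  · have hc' := kswap_proper hc hγI htI v₁
    refine LA hG h01 hc' (θ := γ) ?_ ?_
    · exact (kswap_miss_unreach hr).2 h0
    · refine (kswap_miss_reach hγI htI (SimpleGraph.Reachable.refl v₁)).2 ?_
      rw [swapc_gamma]
      exact ht1

/-- Pair `(v₀, v₃)`, Case I, branch `deg v₂ < Δ`. -/
lemma p03I_d2 (hG : ¬ EdgeColorable G G.maxDegree) (h01 : G.Adj v₀ v₁) (h12 : G.Adj v₁ v₂)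
    (h23 : G.Adj v₂ v₃) (n02 : v₀ ≠ v₂) (n03 : v₀ ≠ v₃) (n13 : v₁ ≠ v₃)
    {c : Sym2 V → ℕ}
    (hc : IsProperEdgeColoring (G.deleteEdges {s(v₀, v₁)}) G.maxDegree c)
    (hA : c (s(v₁, v₂)) ∈
      missingColors (G.deleteEdges {s(v₀, v₁)}) G.maxDegree c v₀)
    (hB1 : c (s(v₂, v₃)) ∈
      missingColors (G.deleteEdges {s(v₀, v₁)}) G.maxDegree c v₁)
    (hd2 : G.degree v₂ < G.maxDegree)
    (γ : ℕ)
    (h0 : γ ∈ missingColors (G.deleteEdges {s(v₀, v₁)}) G.maxDegree c v₀)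
    (h3 : γ ∈ missingColors (G.deleteEdges {s(v₀, v₁)}) G.maxDegree c v₃) :
    False := by
  classical
  have he₂ := edge_bd_mem h01 h12 n02
  have he₃ := edge_23_mem (v₀ := v₀) h12 h23 n02
  obtain ⟨δ, hδ2, -⟩ := missing_at_small (G := G) (d := s(v₀, v₁)) (c := c) v₂ ∅
    (by simpa using hd2)
  by_cases hδ0 : δ ∈ missingColors (G.deleteEdges {s(v₀, v₁)}) G.maxDegree c v₀
  · exact B02 hG h01 h12 n02 hc hA hδ0 hδ2
  have hγδ : γ ≠ δ := fun h => hδ0 (h ▸ h0)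
  have hγα : γ ≠ c (s(v₁, v₂)) := by
    intro h
    exact shift_facts hG h01 h12 h23 n02 n03 n13 hc hA hB1 γ (Or.inr h) h3
  have hγβ : γ ≠ c (s(v₂, v₃)) :=
    fun h => missing_ne h3 he₃ (Sym2.mem_mk_right _ _) h.symm
  have hδα : δ ≠ c (s(v₁, v₂)) :=
    fun h => missing_ne hδ2 he₂ (Sym2.mem_mk_right _ _) h.symm
  have hδβ : δ ≠ c (s(v₂, v₃)) :=
    fun h => missing_ne hδ2 he₃ (Sym2.mem_mk_left _ _) h.symm
  have hγI : γ ∈ Finset.Icc 1 G.maxDegree := (mem_missing.1 h0).1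
  have hδI : δ ∈ Finset.Icc 1 G.maxDegree := (mem_missing.1 hδ2).1
  have hu0 := chainG_unique_nbr hc (γ := γ) (δ := δ) (v := v₀) (Or.inl h0)
  have hu2 := chainG_unique_nbr hc (γ := γ) (δ := δ) (v := v₂) (Or.inr hδ2)
  have hu3 := chainG_unique_nbr hc (γ := γ) (δ := δ) (v := v₃) (Or.inl h3)
  by_cases hr : (chainG (G.deleteEdges {s(v₀, v₁)}) c γ δ).Reachable v₃ v₂
  · have h02 : ¬ (chainG (G.deleteEdges {s(v₀, v₁)}) c γ δ).Reachable v₀ v₂ :=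
      fun h => three_ends (chainG_three hc) hu2 hu3 hu0 h23.ne (Ne.symm n02) (Ne.symm n03)
        hr.symm h.symm
    have hc' := kswap_proper hc hγI hδI v₀
    refine B02 hG h01 h12 n02 hc' ?_ (θ := δ) ?_ ?_
    · rw [kswap_apply_fix (fun h => hγα h.symm) (fun h => hδα h.symm)]
      exact (kswap_miss_fix hγI hδI (fun h => hγα h.symm) (fun h => hδα h.symm)).2 hA
    · refine (kswap_miss_reach hγI hδI (SimpleGraph.Reachable.refl v₀)).2 ?_
      rw [swapc_delta]
      exact h0
    · refine (kswap_miss_unreach (fun h => h02 h.symm)).2 hδ2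
  · have hc' := kswap_proper hc hγI hδI v₂
    refine p23 hG h01 h12 h23 n02 n03 n13 hc' ?_ ?_ γ ?_ ?_
    · rw [kswap_apply_fix (fun h => hγα h.symm) (fun h => hδα h.symm)]
      exact (kswap_miss_fix hγI hδI (fun h => hγα h.symm) (fun h => hδα h.symm)).2 hA
    · rw [kswap_apply_fix (fun h => hγβ h.symm) (fun h => hδβ h.symm)]
      right
      exact (kswap_miss_fix hγI hδI (fun h => hγβ h.symm) (fun h => hδβ h.symm)).2 hB1
    · refine (kswap_miss_reach hγI hδI (SimpleGraph.Reachable.refl v₂)).2 ?_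
      rw [swapc_gamma]
      exact hδ2
    · exact (kswap_miss_unreach hr).2 h3

/-- Pair `(v₀, v₃)`, Case I. -/
lemma p03I (hG : ¬ EdgeColorable G G.maxDegree) (h01 : G.Adj v₀ v₁) (h12 : G.Adj v₁ v₂)
    (h23 : G.Adj v₂ v₃) (n02 : v₀ ≠ v₂) (n03 : v₀ ≠ v₃) (n13 : v₁ ≠ v₃)
    {c : Sym2 V → ℕ}
    (hc : IsProperEdgeColoring (G.deleteEdges {s(v₀, v₁)}) G.maxDegree c)
    (hA : c (s(v₁, v₂)) ∈
      missingColors (G.deleteEdges {s(v₀, v₁)}) G.maxDegree c v₀)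
    (hB1 : c (s(v₂, v₃)) ∈
      missingColors (G.deleteEdges {s(v₀, v₁)}) G.maxDegree c v₁)
    (hmin : min (G.degree v₁) (G.degree v₂) < G.maxDegree)
    (γ : ℕ)
    (h0 : γ ∈ missingColors (G.deleteEdges {s(v₀, v₁)}) G.maxDegree c v₀)
    (h3 : γ ∈ missingColors (G.deleteEdges {s(v₀, v₁)}) G.maxDegree c v₃) :
    False := by
  rcases min_lt_iff.1 hmin with h | h
  · exact p03I_d1 hG h01 h12 h23 n02 n03 n13 hc hA hB1 h γ h0 h3
  · exact p03I_d2 hG h01 h12 h23 n02 n03 n13 hc hA hB1 h γ h0 h3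

/-- Pair `(v₁, v₃)`, Case II (`c e₃` missing at `v₀`). -/
lemma p13II (hG : ¬ EdgeColorable G G.maxDegree) (h01 : G.Adj v₀ v₁) (h12 : G.Adj v₁ v₂)
    (h23 : G.Adj v₂ v₃) (n02 : v₀ ≠ v₂) (n03 : v₀ ≠ v₃) (n13 : v₁ ≠ v₃)
    {c : Sym2 V → ℕ}
    (hc : IsProperEdgeColoring (G.deleteEdges {s(v₀, v₁)}) G.maxDegree c)
    (hA : c (s(v₁, v₂)) ∈
      missingColors (G.deleteEdges {s(v₀, v₁)}) G.maxDegree c v₀)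
    (hB0 : c (s(v₂, v₃)) ∈
      missingColors (G.deleteEdges {s(v₀, v₁)}) G.maxDegree c v₀)
    (hmin : min (G.degree v₁) (G.degree v₂) < G.maxDegree)
    (γ : ℕ)
    (h1 : γ ∈ missingColors (G.deleteEdges {s(v₀, v₁)}) G.maxDegree c v₁)
    (h3 : γ ∈ missingColors (G.deleteEdges {s(v₀, v₁)}) G.maxDegree c v₃) :
    False := by
  classical
  have he₂ := edge_bd_mem h01 h12 n02
  have he₃ := edge_23_mem (v₀ := v₀) h12 h23 n02
  have hγα : γ ≠ c (s(v₁, v₂)) :=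
    fun h => missing_ne h1 he₂ (Sym2.mem_mk_left _ _) h.symm
  have hγβ : γ ≠ c (s(v₂, v₃)) :=
    fun h => missing_ne h3 he₃ (Sym2.mem_mk_right _ _) h.symm
  have hαβ : c (s(v₁, v₂)) ≠ c (s(v₂, v₃)) :=
    hc.2 _ he₂ _ he₃ (edges_12_23_ne (v₃ := v₃) h12 n13)
      ⟨v₂, Sym2.mem_mk_right _ _, Sym2.mem_mk_left _ _⟩
  have hγI : γ ∈ Finset.Icc 1 G.maxDegree := (mem_missing.1 h1).1
  have hβI : c (s(v₂, v₃)) ∈ Finset.Icc 1 G.maxDegree := hc.1 _ he₃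
  have hu0 := chainG_unique_nbr hc (γ := γ) (δ := c (s(v₂, v₃))) (v := v₀) (Or.inr hB0)
  have hu1 := chainG_unique_nbr hc (γ := γ) (δ := c (s(v₂, v₃))) (v := v₁) (Or.inl h1)
  have hu3 := chainG_unique_nbr hc (γ := γ) (δ := c (s(v₂, v₃))) (v := v₃) (Or.inl h3)
  by_cases hr : (chainG (G.deleteEdges {s(v₀, v₁)}) c γ (c (s(v₂, v₃)))).Reachable
      v₀ v₁
  · have h31 : ¬ (chainG (G.deleteEdges {s(v₀, v₁)}) c γ
        (c (s(v₂, v₃)))).Reachable v₃ v₁ :=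
      fun h => three_ends (chainG_three hc) hu1 hu0 hu3 (Ne.symm h01.ne) n13 n03 hr.symm h.symm
    have h03 : ¬ (chainG (G.deleteEdges {s(v₀, v₁)}) c γ
        (c (s(v₂, v₃)))).Reachable v₀ v₃ := fun h => h31 (h.symm.trans hr)
    have h13 : ¬ (chainG (G.deleteEdges {s(v₀, v₁)}) c γ
        (c (s(v₂, v₃)))).Reachable v₁ v₃ := fun h => h31 h.symm
    have hc' := kswap_proper hc hγI hβI v₃
    refine p03I hG h01 h12 h23 n02 n03 n13 hc' ?_ ?_ hmin (c (s(v₂, v₃))) ?_ ?_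
    · rw [kswap_apply_fix (fun h => hγα h.symm) hαβ]
      exact (kswap_miss_unreach h03).2 hA
    · rw [kswap_apply_reach (Sym2.mem_mk_right _ _) (SimpleGraph.Reachable.refl v₃)]
      rw [swapc_delta]
      exact (kswap_miss_unreach h13).2 h1
    · exact (kswap_miss_unreach h03).2 hB0
    · refine (kswap_miss_reach hγI hβI (SimpleGraph.Reachable.refl v₃)).2 ?_
      rw [swapc_delta]
      exact h3
  · have hc' := kswap_proper hc hγI hβI v₁
    refine LA hG h01 hc' (θ := c (s(v₂, v₃))) ?_ ?_
    · exact (kswap_miss_unreach hr).2 hB0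
    · refine (kswap_miss_reach hγI hβI (SimpleGraph.Reachable.refl v₁)).2 ?_
      rw [swapc_delta]
      exact h1

/-- Pair `(v₁, v₃)`. -/
lemma p13 (hG : ¬ EdgeColorable G G.maxDegree) (h01 : G.Adj v₀ v₁) (h12 : G.Adj v₁ v₂)
    (h23 : G.Adj v₂ v₃) (n02 : v₀ ≠ v₂) (n03 : v₀ ≠ v₃) (n13 : v₁ ≠ v₃)
    {c : Sym2 V → ℕ}
    (hc : IsProperEdgeColoring (G.deleteEdges {s(v₀, v₁)}) G.maxDegree c)
    (hA : c (s(v₁, v₂)) ∈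
      missingColors (G.deleteEdges {s(v₀, v₁)}) G.maxDegree c v₀)
    (hB : c (s(v₂, v₃)) ∈
      missingColors (G.deleteEdges {s(v₀, v₁)}) G.maxDegree c v₀ ∪
      missingColors (G.deleteEdges {s(v₀, v₁)}) G.maxDegree c v₁)
    (hmin : min (G.degree v₁) (G.degree v₂) < G.maxDegree)
    (γ : ℕ)
    (h1 : γ ∈ missingColors (G.deleteEdges {s(v₀, v₁)}) G.maxDegree c v₁)
    (h3 : γ ∈ missingColors (G.deleteEdges {s(v₀, v₁)}) G.maxDegree c v₃) :
    False := by
  by_cases hB1 : c (s(v₂, v₃)) ∈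
      missingColors (G.deleteEdges {s(v₀, v₁)}) G.maxDegree c v₁
  · exact shift_facts hG h01 h12 h23 n02 n03 n13 hc hA hB1 γ (Or.inl h1) h3
  · rcases hB with hB0 | hB0
    · exact p13II hG h01 h12 h23 n02 n03 n13 hc hA hB0 hmin γ h1 h3
    · exact hB1 hB0

/-- Pair `(v₀, v₃)`, Case II. -/
lemma p03II (hG : ¬ EdgeColorable G G.maxDegree) (h01 : G.Adj v₀ v₁) (h12 : G.Adj v₁ v₂)
    (h23 : G.Adj v₂ v₃) (n02 : v₀ ≠ v₂) (n03 : v₀ ≠ v₃) (n13 : v₁ ≠ v₃)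
    {c : Sym2 V → ℕ}
    (hc : IsProperEdgeColoring (G.deleteEdges {s(v₀, v₁)}) G.maxDegree c)
    (hA : c (s(v₁, v₂)) ∈
      missingColors (G.deleteEdges {s(v₀, v₁)}) G.maxDegree c v₀)
    (hB0 : c (s(v₂, v₃)) ∈
      missingColors (G.deleteEdges {s(v₀, v₁)}) G.maxDegree c v₀)
    (hnB1 : c (s(v₂, v₃)) ∉
      missingColors (G.deleteEdges {s(v₀, v₁)}) G.maxDegree c v₁)
    (hmin : min (G.degree v₁) (G.degree v₂) < G.maxDegree)
    (γ : ℕ)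
    (h0 : γ ∈ missingColors (G.deleteEdges {s(v₀, v₁)}) G.maxDegree c v₀)
    (h3 : γ ∈ missingColors (G.deleteEdges {s(v₀, v₁)}) G.maxDegree c v₃) :
    False := by
  classical
  have he₂ := edge_bd_mem h01 h12 n02
  have he₃ := edge_23_mem (v₀ := v₀) h12 h23 n02
  obtain ⟨t, ht1, -⟩ := missing_at_endpoint h01 (c := c) (k := G.maxDegree) ∅
    (by simpa using Nat.lt_succ_of_le (G.degree_le_maxDegree v₁))
  have htα : t ≠ c (s(v₁, v₂)) :=
    fun h => missing_ne ht1 he₂ (Sym2.mem_mk_left _ _) h.symm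
  have htβ : t ≠ c (s(v₂, v₃)) := fun h => hnB1 (h ▸ ht1)
  have hγβ : γ ≠ c (s(v₂, v₃)) :=
    fun h => missing_ne h3 he₃ (Sym2.mem_mk_right _ _) h.symm
  have hαβ : c (s(v₁, v₂)) ≠ c (s(v₂, v₃)) :=
    hc.2 _ he₂ _ he₃ (edges_12_23_ne (v₃ := v₃) h12 n13)
      ⟨v₂, Sym2.mem_mk_right _ _, Sym2.mem_mk_left _ _⟩
  have htI : t ∈ Finset.Icc 1 G.maxDegree := (mem_missing.1 ht1).1
  by_cases hγα : γ = c (s(v₁, v₂))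
  · -- `γ = α` : use the `(α, t)`-chain
    rw [hγα] at h0 h3
    have hαI : c (s(v₁, v₂)) ∈ Finset.Icc 1 G.maxDegree := hc.1 _ he₂
    have hu0 := chainG_unique_nbr hc (γ := c (s(v₁, v₂))) (δ := t) (v := v₀) (Or.inl h0)
    have hu1 := chainG_unique_nbr hc (γ := c (s(v₁, v₂))) (δ := t) (v := v₁) (Or.inr ht1)
    have hu3 := chainG_unique_nbr hc (γ := c (s(v₁, v₂))) (δ := t) (v := v₃) (Or.inl h3)
    by_cases h13r : (chainG (G.deleteEdges {s(v₀, v₁)}) c (c (s(v₁, v₂)))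
        t).Reachable v₁ v₃
    · have h01r : ¬ (chainG (G.deleteEdges {s(v₀, v₁)}) c (c (s(v₁, v₂)))
          t).Reachable v₀ v₁ :=
        fun h => three_ends (chainG_three hc) hu1 hu0 hu3 (Ne.symm h01.ne) n13 n03 h.symm h13r
      have hc' := kswap_proper hc hαI htI v₁
      refine LA hG h01 hc' (θ := c (s(v₁, v₂))) ?_ ?_
      · exact (kswap_miss_unreach h01r).2 h0
      · refine (kswap_miss_reach hαI htI (SimpleGraph.Reachable.refl v₁)).2 ?_
        rw [swapc_gamma]
        exact ht1
    · by_cases h03r : (chainG (G.deleteEdges {s(v₀, v₁)}) c (c (s(v₁, v₂)))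
          t).Reachable v₀ v₃
      · have hc' := kswap_proper hc hαI htI v₃
        refine LA hG h01 hc' (θ := t) ?_ ?_
        · refine (kswap_miss_reach hαI htI h03r).2 ?_
          rw [swapc_delta]
          exact h0
        · exact (kswap_miss_unreach h13r).2 ht1
      · have hc' := kswap_proper hc hαI htI v₃
        refine p13 hG h01 h12 h23 n02 n03 n13 hc' ?_ ?_ hmin t ?_ ?_
        · rw [kswap_apply_unreach he₂ (Sym2.mem_mk_left _ _) h13r]
          exact (kswap_miss_unreach h03r).2 h0
        · rw [kswap_apply_fix (fun h => hαβ h.symm) (fun h => htβ h.symm)]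
          left
          exact (kswap_miss_unreach h03r).2 hB0
        · exact (kswap_miss_unreach h13r).2 ht1
        · refine (kswap_miss_reach hαI htI (SimpleGraph.Reachable.refl v₃)).2 ?_
          rw [swapc_delta]
          exact h3
  · -- `γ ≠ α` : use the `(γ, t)`-chain
    by_cases ht0 : t ∈ missingColors (G.deleteEdges {s(v₀, v₁)}) G.maxDegree c v₀
    · exact LA hG h01 hc ht0 ht1
    have hγI : γ ∈ Finset.Icc 1 G.maxDegree := (mem_missing.1 h0).1
    have hu0 := chainG_unique_nbr hc (γ := γ) (δ := t) (v := v₀) (Or.inl h0)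
    have hu1 := chainG_unique_nbr hc (γ := γ) (δ := t) (v := v₁) (Or.inr ht1)
    have hu3 := chainG_unique_nbr hc (γ := γ) (δ := t) (v := v₃) (Or.inl h3)
    by_cases hr : (chainG (G.deleteEdges {s(v₀, v₁)}) c γ t).Reachable v₀ v₁
    · have h31 : ¬ (chainG (G.deleteEdges {s(v₀, v₁)}) c γ t).Reachable v₃ v₁ :=
        fun h => three_ends (chainG_three hc) hu1 hu0 hu3 (Ne.symm h01.ne) n13 n03
          hr.symm h.symm
      have h03 : ¬ (chainG (G.deleteEdges {s(v₀, v₁)}) c γ t).Reachable v₀ v₃ :=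
        fun h => h31 (h.symm.trans hr)
      have h13 : ¬ (chainG (G.deleteEdges {s(v₀, v₁)}) c γ t).Reachable v₁ v₃ :=
        fun h => h31 h.symm
      have hc' := kswap_proper hc hγI htI v₃
      refine p13 hG h01 h12 h23 n02 n03 n13 hc' ?_ ?_ hmin t ?_ ?_
      · rw [kswap_apply_fix (fun h => hγα h.symm) (fun h => htα h.symm)]
        exact (kswap_miss_unreach h03).2 hA
      · rw [kswap_apply_fix (fun h => hγβ h.symm) (fun h => htβ h.symm)]
        left
        exact (kswap_miss_unreach h03).2 hB0
      · exact (kswap_miss_unreach h13).2 ht1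
      · refine (kswap_miss_reach hγI htI (SimpleGraph.Reachable.refl v₃)).2 ?_
        rw [swapc_delta]
        exact h3
    · have hc' := kswap_proper hc hγI htI v₁
      refine LA hG h01 hc' (θ := γ) ?_ ?_
      · exact (kswap_miss_unreach hr).2 h0
      · refine (kswap_miss_reach hγI htI (SimpleGraph.Reachable.refl v₁)).2 ?_
        rw [swapc_gamma]
        exact ht1

/-- Pair `(v₀, v₃)`. -/
lemma p03 (hG : ¬ EdgeColorable G G.maxDegree) (h01 : G.Adj v₀ v₁) (h12 : G.Adj v₁ v₂)
    (h23 : G.Adj v₂ v₃) (n02 : v₀ ≠ v₂) (n03 : v₀ ≠ v₃) (n13 : v₁ ≠ v₃)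
    {c : Sym2 V → ℕ}
    (hc : IsProperEdgeColoring (G.deleteEdges {s(v₀, v₁)}) G.maxDegree c)
    (hA : c (s(v₁, v₂)) ∈
      missingColors (G.deleteEdges {s(v₀, v₁)}) G.maxDegree c v₀)
    (hB : c (s(v₂, v₃)) ∈
      missingColors (G.deleteEdges {s(v₀, v₁)}) G.maxDegree c v₀ ∪
      missingColors (G.deleteEdges {s(v₀, v₁)}) G.maxDegree c v₁)
    (hmin : min (G.degree v₁) (G.degree v₂) < G.maxDegree)
    (γ : ℕ)
    (h0 : γ ∈ missingColors (G.deleteEdges {s(v₀, v₁)}) G.maxDegree c v₀)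
    (h3 : γ ∈ missingColors (G.deleteEdges {s(v₀, v₁)}) G.maxDegree c v₃) :
    False := by
  by_cases hB1 : c (s(v₂, v₃)) ∈
      missingColors (G.deleteEdges {s(v₀, v₁)}) G.maxDegree c v₁
  · exact p03I hG h01 h12 h23 n02 n03 n13 hc hA hB1 hmin γ h0 h3
  · rcases hB with hB0 | hB0
    · exact p03II hG h01 h12 h23 n02 n03 n13 hc hA hB0 hB1 hmin γ h0 h3
    · exact hB1 hB0
end Top
end KP


-- Kierstead path lemma: let `G` be class 2 with maximum degree `Δ`, `v₀v₁ ∈ E(G)`,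
-- `φ` a proper edge `Δ`-coloring of `G − v₀v₁`, and
-- `K = (v₀, v₀v₁, v₁, v₁v₂, v₂, v₂v₃, v₃)` a Kierstead path with respect to `v₀v₁`
-- and `φ`.  If `min(deg v₁, deg v₂) < Δ`, then `{v₀, v₁, v₂, v₃}` is `φ`-elementary.
open Classical in
theorem stmt_17 {V : Type*} [Fintype V] (G : SimpleGraph V)
    (hclass2a : EdgeColorable G (G.maxDegree + 1))
    (hclass2b : ¬ EdgeColorable G G.maxDegree)
    (v₀ v₁ v₂ v₃ : V) (hnd : [v₀, v₁, v₂, v₃].Nodup)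
    (h01 : G.Adj v₀ v₁) (h12 : G.Adj v₁ v₂) (h23 : G.Adj v₂ v₃)
    (c : Sym2 V → ℕ)
    (hc : IsProperEdgeColoring (G.deleteEdges {s(v₀, v₁)}) G.maxDegree c)
    (hK1 : c (s(v₁, v₂)) ∈
      missingColors (G.deleteEdges {s(v₀, v₁)}) G.maxDegree c v₀)
    (hK2 : c (s(v₂, v₃)) ∈
      missingColors (G.deleteEdges {s(v₀, v₁)}) G.maxDegree c v₀ ∪
        missingColors (G.deleteEdges {s(v₀, v₁)}) G.maxDegree c v₁)
    (hmin : min (G.degree v₁) (G.degree v₂) < G.maxDegree) :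
    ∀ u ∈ ({v₀, v₁, v₂, v₃} : Set V), ∀ v ∈ ({v₀, v₁, v₂, v₃} : Set V), u ≠ v →
      missingColors (G.deleteEdges {s(v₀, v₁)}) G.maxDegree c u ∩
        missingColors (G.deleteEdges {s(v₀, v₁)}) G.maxDegree c v = ∅ := by
  intro u hu v hv huv
  simp only [List.nodup_cons, List.mem_cons, List.not_mem_nil, or_false,
    List.mem_singleton, List.nodup_nil, and_true, not_or] at hnd
  obtain ⟨⟨n01, n02, n03⟩, ⟨n12, n13⟩, n23⟩ := hnd
  have D01 := fun θ h h' => KP.LA hclass2b h01 hc (θ := θ) h h'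
  have D12 := fun θ h h' => KP.B12 hclass2b h01 h12 n02 hc hK1 (θ := θ) h h'
  have D02 := fun θ h h' => KP.B02 hclass2b h01 h12 n02 hc hK1 (θ := θ) h h'
  have D23 := KP.p23 hclass2b h01 h12 h23 n02 n03 n13 hc hK1 hK2
  have D13 := KP.p13 hclass2b h01 h12 h23 n02 n03 n13 hc hK1 hK2 hmin
  have D03 := KP.p03 hclass2b h01 h12 h23 n02 n03 n13 hc hK1 hK2 hmin
  rw [Set.eq_empty_iff_forall_notMem]
  rintro θ ⟨hu', hv'⟩
  simp only [Set.mem_insert_iff, Set.mem_singleton_iff] at hu hv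
  rcases hu with rfl | rfl | rfl | rfl <;> rcases hv with rfl | rfl | rfl | rfl <;>
    first
      | exact huv rfl
      | exact D01 θ hu' hv'
      | exact D01 θ hv' hu'
      | exact D02 θ hu' hv'
      | exact D02 θ hv' hu'
      | exact D03 θ hu' hv'
      | exact D03 θ hv' hu'
      | exact D12 θ hu' hv'
      | exact D12 θ hv' hu'
      | exact D13 θ hu' hv'
      | exact D13 θ hv' hu'
      | exact D23 θ hu' hv'
      | exact D23 θ hv' hu'
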